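/- arXiv:2011.14219 — 2 statements merged into one kernel-verified Lean document; each statement's English description precedes it below -/
import Mathlib

section
/- Suppose the norm ‖·‖ on ℝ^k satisfies Assumption 1, 0 < γ₂ ≤ γ₁ ≤ 1, and C₁, C₂ > 0; set k₊ := |V|. Let X be an ℝ^k-valued random vector whose law has a Lebesgue density p_X continuous at 0 with p_X(0) > 0, and with 0 an interior point of its support. Then there exists a constant c ∈ (0,∞), not depending on p_X, such that lim_{b→0⁺} b^{−(k₊/γ₁ + (k−k₊)/γ₂)} · P( C₁‖(X)_{V+}‖^{γ₁} + C₂‖(X)_{V−}‖^{γ₂} < b ) = c · p_X(0). -/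
open MeasureTheory Filter Finset

/-- Positive part of a vector relative to coordinate set `V`. -/
def vplus {k : ℕ} (V : Finset (Fin k)) (z : Fin k → ℝ) : Fin k → ℝ :=
  fun j => if j ∈ V then max (z j) 0 else z j

/-- Negative part of a vector relative to coordinate set `V`. -/
def vminus {k : ℕ} (V : Finset (Fin k)) (z : Fin k → ℝ) : Fin k → ℝ :=
  vplus V (-z)

/-- A norm on `ℝ^k` satisfying Assumption 1 (monotone in the magnitude of each coordinate). -/
structure MonNorm (k : ℕ) where
  N : (Fin k → ℝ) → ℝ
  add_le : ∀ x y, N (x + y) ≤ N x + N y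
  smul_eq : ∀ (a : ℝ) (x), N (a • x) = |a| * N x
  eq_zero_iff : ∀ x, N x = 0 ↔ x = 0
  mono : ∀ z w : Fin k → ℝ, (∀ j, |z j| ≤ |w j|) → N z ≤ N w

/-- Hölder continuity with exponent `γ` and constant `C` w.r.t. the norm `N`. -/
def HolderW {k : ℕ} (N : (Fin k → ℝ) → ℝ) (γ C : ℝ) (f : (Fin k → ℝ) → ℝ) : Prop :=
  ∀ x z : Fin k → ℝ, |f x - f z| ≤ C * N (x - z) ^ γ

/-- Coordinatewise monotonicity w.r.t. the coordinates in `V`. -/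
def MonoV {k : ℕ} (V : Finset (Fin k)) (f : (Fin k → ℝ) → ℝ) : Prop :=
  ∀ x z : Fin k → ℝ, (∀ j ∈ V, z j ≤ x j) → (∀ j ∉ V, x j = z j) → f z ≤ f x

/-- The monotone Hölder class `Λ₊,V(γ,C)`. -/
def Lam {k : ℕ} (V : Finset (Fin k)) (N : (Fin k → ℝ) → ℝ) (γ C : ℝ) :
    Set ((Fin k → ℝ) → ℝ) :=
  {f | HolderW N γ C f ∧ MonoV V f}


namespace Stmt15

variable {k : ℕ} (Nm : MonNorm k)

theorem MN_zero : Nm.N 0 = 0 := (Nm.eq_zero_iff 0).2 rfl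

theorem MN_neg (x : Fin k → ℝ) : Nm.N (-x) = Nm.N x := by
  have h := Nm.smul_eq (-1) x
  simpa using h

theorem MN_nonneg (x : Fin k → ℝ) : 0 ≤ Nm.N x := by
  have h := Nm.add_le x (-x)
  rw [add_neg_cancel, MN_zero, MN_neg] at h
  linarith

theorem MN_single (j : Fin k) (c : ℝ) :
    Nm.N (Pi.single j c) = |c| * Nm.N (Pi.single j 1) := by
  rw [← Nm.smul_eq]
  congr 1
  funext i
  by_cases h : i = j <;> simp [Pi.single_apply, h]

theorem MN_single_pos (j : Fin k) : 0 < Nm.N (Pi.single j 1) := by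
  refine lt_of_le_of_ne (MN_nonneg Nm _) fun h => ?_
  have h2 := (Nm.eq_zero_iff _).1 h.symm
  have := congrFun h2 j
  simp at this

theorem MN_sum_le {ι : Type*} (s : Finset ι) (f : ι → (Fin k → ℝ)) :
    Nm.N (∑ i ∈ s, f i) ≤ ∑ i ∈ s, Nm.N (f i) := by
  classical
  induction s using Finset.cons_induction with
  | empty => simp [MN_zero]
  | cons a s ha ih =>
    rw [Finset.sum_cons, Finset.sum_cons]
    exact (Nm.add_le _ _).trans (by linarith)

theorem MN_le_sum (x : Fin k → ℝ) :
    Nm.N x ≤ ∑ j, |x j| * Nm.N (Pi.single j 1) := by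
  calc Nm.N x = Nm.N (∑ j, Pi.single j (x j)) := by rw [Finset.univ_sum_single]
    _ ≤ ∑ j, Nm.N (Pi.single j (x j)) := MN_sum_le Nm _ _
    _ = ∑ j, |x j| * Nm.N (Pi.single j 1) := Finset.sum_congr rfl fun j _ => MN_single Nm j (x j)

theorem MN_abs_sub (x y : Fin k → ℝ) : |Nm.N x - Nm.N y| ≤ Nm.N (x - y) := by
  rw [abs_sub_le_iff]
  constructor
  · have h := Nm.add_le (x - y) y
    rw [sub_add_cancel] at h
    linarith
  · have h := Nm.add_le (y - x) x
    rw [sub_add_cancel] at h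
    have h2 : Nm.N (y - x) = Nm.N (x - y) := by rw [← MN_neg Nm (y - x), neg_sub]
    linarith

theorem MN_cont : Continuous Nm.N := by
  rw [Metric.continuous_iff]
  intro x ε hε
  set K : ℝ := ∑ j, Nm.N (Pi.single j 1) with hK
  have hK0 : 0 ≤ K := Finset.sum_nonneg fun j _ => MN_nonneg Nm _
  refine ⟨ε / (K + 1), by positivity, fun y hy => ?_⟩
  have h1 : dist (Nm.N y) (Nm.N x) ≤ Nm.N (y - x) := by
    rw [Real.dist_eq]; exact MN_abs_sub Nm y x
  have h2 : Nm.N (y - x) ≤ dist y x * K := by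
    calc Nm.N (y - x) ≤ ∑ j, |(y - x) j| * Nm.N (Pi.single j 1) := MN_le_sum Nm _
      _ ≤ ∑ j, dist y x * Nm.N (Pi.single j 1) := by
          refine Finset.sum_le_sum fun j _ => ?_
          refine mul_le_mul_of_nonneg_right ?_ (MN_nonneg Nm _)
          have := dist_le_pi_dist y x j
          rwa [Real.dist_eq] at this
      _ = dist y x * K := by rw [← Finset.mul_sum]
  have h3 : dist y x * K ≤ (ε / (K + 1)) * K :=
    mul_le_mul_of_nonneg_right hy.le hK0
  have h4 : (ε / (K + 1)) * K < ε := by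
    have : (ε / (K + 1)) * K < (ε / (K + 1)) * (K + 1) := by
      refine mul_lt_mul_of_pos_left (by linarith) (by positivity)
    rw [div_mul_cancel₀] at this
    · exact this
    · positivity
  linarith

theorem MN_coord (x : Fin k → ℝ) (j : Fin k) :
    Nm.N (Pi.single j 1) * |x j| ≤ Nm.N x := by
  rw [mul_comm, ← abs_abs (x j), ← MN_single Nm j |x j|]
  refine Nm.mono _ _ fun i => ?_
  by_cases h : i = j
  · subst h; simp
  · simp [Pi.single_apply, h]

/-- off-diagonal-scaled positive part -/
def phi (V : Finset (Fin k)) (r : ℝ) (y : Fin k → ℝ) : Fin k → ℝ :=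
  fun j => if j ∈ V then max (y j) 0 else r * y j

noncomputable def Ff (V : Finset (Fin k)) (Nm : MonNorm k) (γ₁ γ₂ C₁ C₂ : ℝ) (x : Fin k → ℝ) : ℝ :=
  C₁ * Nm.N (vplus V x) ^ γ₁ + C₂ * Nm.N (vminus V x) ^ γ₂

noncomputable def Hf (V : Finset (Fin k)) (Nm : MonNorm k) (γ₁ γ₂ C₁ C₂ : ℝ) (r : ℝ) (y : Fin k → ℝ) : ℝ :=
  C₁ * Nm.N (phi V r y) ^ γ₁ + C₂ * Nm.N (vminus V y) ^ γ₂

def Aset (V : Finset (Fin k)) (Nm : MonNorm k) (γ₁ γ₂ C₁ C₂ : ℝ) (b : ℝ) :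
    Set (Fin k → ℝ) := {x | Ff V Nm γ₁ γ₂ C₁ C₂ x < b}

def Bset (V : Finset (Fin k)) (Nm : MonNorm k) (γ₁ γ₂ C₁ C₂ : ℝ) (r : ℝ) :
    Set (Fin k → ℝ) := {y | Hf V Nm γ₁ γ₂ C₁ C₂ r y < 1}

def orth (s : Fin k → Bool) : Set (Fin k → ℝ) :=
  {x | ∀ j, if s j then 0 ≤ x j else x j < 0}

lemma vminus_apply (V : Finset (Fin k)) (z : Fin k → ℝ) (j : Fin k) :
    vminus V z j = if j ∈ V then max (-z j) 0 else -z j := rfl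

lemma vplus_eq_phi_one (V : Finset (Fin k)) (x : Fin k → ℝ) :
    vplus V x = phi V 1 x := by
  funext j; by_cases h : j ∈ V <;> simp [vplus, phi, h]

lemma cont_phi (V : Finset (Fin k)) (r : ℝ) : Continuous (phi V r) := by
  refine continuous_pi fun j => ?_
  by_cases h : j ∈ V
  · simpa [phi, h] using (continuous_apply j).max continuous_const
  · simp only [phi, h, ↓reduceIte]; exact continuous_const.mul (continuous_apply j)

lemma cont_vplus (V : Finset (Fin k)) : Continuous (vplus V) := by
  rw [show vplus V = phi V 1 from funext fun x => vplus_eq_phi_one V x]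
  exact cont_phi V 1

lemma cont_vminus (V : Finset (Fin k)) : Continuous (vminus V) :=
  (cont_vplus V).comp continuous_neg

lemma cont_Ff (V : Finset (Fin k)) (Nm : MonNorm k) {γ₁ γ₂ : ℝ} (C₁ C₂ : ℝ)
    (h1 : 0 < γ₁) (h2 : 0 < γ₂) : Continuous (Ff V Nm γ₁ γ₂ C₁ C₂) := by
  refine Continuous.add ?_ ?_
  · exact continuous_const.mul ((Real.continuous_rpow_const h1.le).comp
      ((MN_cont Nm).comp (cont_vplus V)))
  · exact continuous_const.mul ((Real.continuous_rpow_const h2.le).comp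
      ((MN_cont Nm).comp (cont_vminus V)))

lemma cont_Hf (V : Finset (Fin k)) (Nm : MonNorm k) {γ₁ γ₂ : ℝ} (C₁ C₂ : ℝ)
    (h1 : 0 < γ₁) (h2 : 0 < γ₂) (r : ℝ) : Continuous (Hf V Nm γ₁ γ₂ C₁ C₂ r) := by
  refine Continuous.add ?_ ?_
  · exact continuous_const.mul ((Real.continuous_rpow_const h1.le).comp
      ((MN_cont Nm).comp (cont_phi V r)))
  · exact continuous_const.mul ((Real.continuous_rpow_const h2.le).comp
      ((MN_cont Nm).comp (cont_vminus V)))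

lemma isOpen_Aset (V : Finset (Fin k)) (Nm : MonNorm k) {γ₁ γ₂ : ℝ} (C₁ C₂ : ℝ)
    (h1 : 0 < γ₁) (h2 : 0 < γ₂) (b : ℝ) : IsOpen (Aset V Nm γ₁ γ₂ C₁ C₂ b) :=
  isOpen_lt (cont_Ff V Nm C₁ C₂ h1 h2) continuous_const

lemma isOpen_Bset (V : Finset (Fin k)) (Nm : MonNorm k) {γ₁ γ₂ : ℝ} (C₁ C₂ : ℝ)
    (h1 : 0 < γ₁) (h2 : 0 < γ₂) (r : ℝ) : IsOpen (Bset V Nm γ₁ γ₂ C₁ C₂ r) :=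
  isOpen_lt (cont_Hf V Nm C₁ C₂ h1 h2 r) continuous_const

/-- key coordinatewise lower bound -/
lemma coord_bound (V : Finset (Fin k)) (Nm : MonNorm k) (r : ℝ) (y : Fin k → ℝ) (j : Fin k) :
    Nm.N (Pi.single j 1) * |y j| ≤ Nm.N (phi V r y) + Nm.N (vminus V y) := by
  by_cases hj : j ∈ V
  · have habs : |y j| = max (y j) 0 + max (-y j) 0 := by
      rcases le_total 0 (y j) with h | h
      · rw [abs_of_nonneg h, max_eq_left h, max_eq_right (by linarith), add_zero]
      · rw [abs_of_nonpos h, max_eq_right h, max_eq_left (by linarith), zero_add]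
    rw [habs, mul_add]
    have h1 : Nm.N (Pi.single j 1) * max (y j) 0 ≤ Nm.N (phi V r y) := by
      have e1 : Nm.N (Pi.single j (max (y j) 0)) = Nm.N (Pi.single j 1) * max (y j) 0 := by
        rw [MN_single Nm, abs_of_nonneg (le_max_right _ _), mul_comm]
      rw [← e1]
      refine Nm.mono _ _ fun i => ?_
      by_cases hi : i = j
      · subst hi; simp [phi, hj, Pi.single_eq_same]
      · simp [Pi.single_apply, hi, abs_nonneg]
    have h2 : Nm.N (Pi.single j 1) * max (-y j) 0 ≤ Nm.N (vminus V y) := by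
      have e1 : Nm.N (Pi.single j (max (-y j) 0)) = Nm.N (Pi.single j 1) * max (-y j) 0 := by
        rw [MN_single Nm, abs_of_nonneg (le_max_right _ _), mul_comm]
      rw [← e1]
      refine Nm.mono _ _ fun i => ?_
      by_cases hi : i = j
      · subst hi; simp [vminus_apply, hj, Pi.single_eq_same]
      · simp [Pi.single_apply, hi, abs_nonneg]
    exact add_le_add h1 h2
  · have h2 : Nm.N (Pi.single j 1) * |y j| ≤ Nm.N (vminus V y) := by
      have e1 : Nm.N (Pi.single j (y j)) = Nm.N (Pi.single j 1) * |y j| := by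
        rw [MN_single Nm, mul_comm]
      rw [← e1]
      refine Nm.mono _ _ fun i => ?_
      by_cases hi : i = j
      · subst hi; simp [vminus_apply, hj, Pi.single_eq_same]
      · simp [Pi.single_apply, hi, abs_nonneg]
    have := MN_nonneg Nm (phi V r y)
    linarith

/-- inverting a rpow inequality -/
lemma rpow_lt_of {t C γ b : ℝ} (ht : 0 ≤ t) (hC : 0 < C) (hγ : 0 < γ) (hb : 0 < b)
    (h : C * t ^ γ < b) : t < (b / C) ^ (1 / γ) := by
  have h2 : t ^ γ < b / C := by
    rw [lt_div_iff₀ hC, mul_comm]; exact h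
  have h3 : ((b / C) ^ (1 / γ)) ^ γ = b / C := by
    rw [← Real.rpow_mul (by positivity), one_div, inv_mul_cancel₀ hγ.ne', Real.rpow_one]
  rw [← h3] at h2
  exact (Real.rpow_lt_rpow_iff ht (by positivity) hγ).1 h2

-- ### chunk 3
lemma mem_Bset_bounds (V : Finset (Fin k)) (Nm : MonNorm k) {γ₁ γ₂ C₁ C₂ : ℝ}
    (hγ₁ : 0 < γ₁) (hγ₂ : 0 < γ₂) (hC₁ : 0 < C₁) (hC₂ : 0 < C₂) {r : ℝ} {y : Fin k → ℝ}
    (hy : y ∈ Bset V Nm γ₁ γ₂ C₁ C₂ r) :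
    Nm.N (phi V r y) + Nm.N (vminus V y) < (1/C₁) ^ (1/γ₁) + (1/C₂) ^ (1/γ₂) := by
  have h := hy
  simp only [Bset, Hf, Set.mem_setOf_eq] at h
  have n1 : 0 ≤ C₁ * Nm.N (phi V r y) ^ γ₁ :=
    mul_nonneg hC₁.le (Real.rpow_nonneg (MN_nonneg Nm _) _)
  have n2 : 0 ≤ C₂ * Nm.N (vminus V y) ^ γ₂ :=
    mul_nonneg hC₂.le (Real.rpow_nonneg (MN_nonneg Nm _) _)
  have b1 : Nm.N (phi V r y) < (1/C₁) ^ (1/γ₁) :=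
    rpow_lt_of (MN_nonneg Nm _) hC₁ hγ₁ one_pos (by linarith)
  have b2 : Nm.N (vminus V y) < (1/C₂) ^ (1/γ₂) :=
    rpow_lt_of (MN_nonneg Nm _) hC₂ hγ₂ one_pos (by linarith)
  linarith

lemma mem_Aset_bounds (V : Finset (Fin k)) (Nm : MonNorm k) {γ₁ γ₂ C₁ C₂ b : ℝ}
    (hγ₁ : 0 < γ₁) (hγ₂ : 0 < γ₂) (hC₁ : 0 < C₁) (hC₂ : 0 < C₂) (hb : 0 < b) {x : Fin k → ℝ}
    (hx : x ∈ Aset V Nm γ₁ γ₂ C₁ C₂ b) :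
    Nm.N (vplus V x) + Nm.N (vminus V x) < (b/C₁) ^ (1/γ₁) + (b/C₂) ^ (1/γ₂) := by
  have h := hx
  simp only [Aset, Ff, Set.mem_setOf_eq] at h
  have n1 : 0 ≤ C₁ * Nm.N (vplus V x) ^ γ₁ :=
    mul_nonneg hC₁.le (Real.rpow_nonneg (MN_nonneg Nm _) _)
  have n2 : 0 ≤ C₂ * Nm.N (vminus V x) ^ γ₂ :=
    mul_nonneg hC₂.le (Real.rpow_nonneg (MN_nonneg Nm _) _)
  have b1 : Nm.N (vplus V x) < (b/C₁) ^ (1/γ₁) :=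
    rpow_lt_of (MN_nonneg Nm _) hC₁ hγ₁ hb (by linarith)
  have b2 : Nm.N (vminus V x) < (b/C₂) ^ (1/γ₂) :=
    rpow_lt_of (MN_nonneg Nm _) hC₂ hγ₂ hb (by linarith)
  linarith

lemma subset_closedBall_of (Nm : MonNorm k) (S : Set (Fin k → ℝ)) (M : ℝ) (hM0 : 0 ≤ M)
    (hM : ∀ y ∈ S, ∀ j, Nm.N (Pi.single j 1) * |y j| ≤ M) :
    S ⊆ Metric.closedBall 0 (∑ j, M / Nm.N (Pi.single j 1)) := by
  have hR : 0 ≤ ∑ j, M / Nm.N (Pi.single j 1) :=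
    Finset.sum_nonneg fun j _ => div_nonneg hM0 (MN_single_pos Nm j).le
  intro y hy
  rw [Metric.mem_closedBall, dist_zero_right, pi_norm_le_iff_of_nonneg hR]
  intro j
  rw [Real.norm_eq_abs]
  calc |y j| ≤ M / Nm.N (Pi.single j 1) := by
        rw [le_div_iff₀ (MN_single_pos Nm j)]
        rw [mul_comm]; exact hM y hy j
    _ ≤ ∑ i, M / Nm.N (Pi.single i 1) :=
        Finset.single_le_sum (fun i _ => div_nonneg hM0 (MN_single_pos Nm i).le) (mem_univ j)

lemma vol_ne_top_of_ball {S : Set (Fin k → ℝ)} {R : ℝ} (h : S ⊆ Metric.closedBall 0 R) :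
    volume S ≠ ⊤ :=
  ((measure_mono h).trans_lt measure_closedBall_lt_top).ne

lemma Bset_subset_ball (V : Finset (Fin k)) (Nm : MonNorm k) {γ₁ γ₂ C₁ C₂ : ℝ}
    (hγ₁ : 0 < γ₁) (hγ₂ : 0 < γ₂) (hC₁ : 0 < C₁) (hC₂ : 0 < C₂) (r : ℝ) :
    Bset V Nm γ₁ γ₂ C₁ C₂ r ⊆
      Metric.closedBall 0 (∑ j, ((1/C₁) ^ (1/γ₁) + (1/C₂) ^ (1/γ₂)) / Nm.N (Pi.single j 1)) := by
  refine subset_closedBall_of Nm _ _ (by positivity) fun y hy j => ?_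
  exact (coord_bound V Nm r y j).trans (mem_Bset_bounds V Nm hγ₁ hγ₂ hC₁ hC₂ hy).le

lemma Aset_subset_ball (V : Finset (Fin k)) (Nm : MonNorm k) {γ₁ γ₂ C₁ C₂ b : ℝ}
    (hγ₁ : 0 < γ₁) (hγ₂ : 0 < γ₂) (hC₁ : 0 < C₁) (hC₂ : 0 < C₂) (hb : 0 < b) :
    Aset V Nm γ₁ γ₂ C₁ C₂ b ⊆
      Metric.closedBall 0 (∑ j, ((b/C₁) ^ (1/γ₁) + (b/C₂) ^ (1/γ₂)) / Nm.N (Pi.single j 1)) := by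
  refine subset_closedBall_of Nm _ _ (by positivity) fun x hx j => ?_
  have h := coord_bound V Nm 1 x j
  rw [← vplus_eq_phi_one] at h
  exact h.trans (mem_Aset_bounds V Nm hγ₁ hγ₂ hC₁ hC₂ hb hx).le

lemma rho_tendsto {γ₁ γ₂ C₁ C₂ : ℝ} (hγ₁ : 0 < γ₁) (hγ₂ : 0 < γ₂) (hC₁ : 0 < C₁) (hC₂ : 0 < C₂) :
    Tendsto (fun b : ℝ => (b/C₁) ^ (1/γ₁) + (b/C₂) ^ (1/γ₂)) (nhds 0) (nhds 0) := by
  have t1 : ∀ (C γ : ℝ), 0 < C → 0 < γ →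
      Tendsto (fun b : ℝ => (b/C) ^ (1/γ)) (nhds 0) (nhds 0) := by
    intro C γ hC hγ
    have hc : ContinuousAt (fun b : ℝ => (b/C) ^ (1/γ)) 0 :=
      (continuousAt_id.div_const C).rpow_const (Or.inr (by positivity))
    have h := hc.tendsto
    simp only [zero_div, Real.zero_rpow (ne_of_gt (show (0:ℝ) < 1/γ by positivity))] at h
    exact h
  simpa using (t1 C₁ γ₁ hC₁ hγ₁).add (t1 C₂ γ₂ hC₂ hγ₂)

lemma Aset_eventually_small (V : Finset (Fin k)) (Nm : MonNorm k) {γ₁ γ₂ C₁ C₂ : ℝ}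
    (hγ₁ : 0 < γ₁) (hγ₂ : 0 < γ₂) (hC₁ : 0 < C₁) (hC₂ : 0 < C₂) {δ : ℝ} (hδ : 0 < δ) :
    ∀ᶠ b in nhdsWithin (0:ℝ) (Set.Ioi 0), Aset V Nm γ₁ γ₂ C₁ C₂ b ⊆ Metric.ball 0 δ := by
  have hρ : Tendsto (fun b : ℝ => (b/C₁) ^ (1/γ₁) + (b/C₂) ^ (1/γ₂))
      (nhdsWithin (0:ℝ) (Set.Ioi 0)) (nhds 0) :=
    (rho_tendsto hγ₁ hγ₂ hC₁ hC₂).mono_left nhdsWithin_le_nhds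
  have hev : ∀ᶠ b in nhdsWithin (0:ℝ) (Set.Ioi 0),
      ∀ j : Fin k, (b/C₁) ^ (1/γ₁) + (b/C₂) ^ (1/γ₂) < δ * Nm.N (Pi.single j 1) := by
    refine eventually_all.2 fun j => ?_
    exact hρ.eventually_lt_const (mul_pos hδ (MN_single_pos Nm j))
  filter_upwards [hev, self_mem_nhdsWithin] with b hb hbpos
  intro x hx
  rw [Metric.mem_ball, dist_zero_right, pi_norm_lt_iff hδ]
  intro j
  rw [Real.norm_eq_abs]
  have h1 := coord_bound V Nm 1 x j
  rw [← vplus_eq_phi_one] at h1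
  have h2 := mem_Aset_bounds V Nm hγ₁ hγ₂ hC₁ hC₂ hbpos hx
  have h3 := hb j
  have h4 := MN_single_pos Nm j
  nlinarith [abs_nonneg (x j)]

-- ### chunk 4: orthants
lemma measurableSet_orth (s : Fin k → Bool) : MeasurableSet (orth s) := by
  have h : orth s = ⋂ j, {x : Fin k → ℝ | if s j then 0 ≤ x j else x j < 0} := by
    ext x; simp [orth, Set.mem_iInter]
  rw [h]
  refine MeasurableSet.iInter fun j => ?_
  cases hs : s j
  · simpa [hs] using measurableSet_lt (measurable_pi_apply j) measurable_const
  · simpa [hs] using measurableSet_le measurable_const (measurable_pi_apply j)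

lemma iUnion_orth : (⋃ s : Fin k → Bool, orth s) = Set.univ := by
  refine Set.eq_univ_of_forall fun x => Set.mem_iUnion.2 ⟨fun j => decide (0 ≤ x j), fun j => ?_⟩
  by_cases h : 0 ≤ x j
  · simp [h]
  · simp [h, lt_of_not_ge h]

lemma disjoint_orth {s t : Fin k → Bool} (h : s ≠ t) : Disjoint (orth (k := k) s) (orth t) := by
  rw [Set.disjoint_left]
  intro x hxs hxt
  obtain ⟨j, hj⟩ := Function.ne_iff.1 h
  have h1 := hxs j
  have h2 := hxt j
  cases hs : s j <;> cases ht : t j <;> rw [hs] at h1 <;> rw [ht] at h2 <;>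
    simp_all <;> linarith

-- ### diagonal scaling
noncomputable def dvec (V : Finset (Fin k)) (γ₁ γ₂ : ℝ) (s : Fin k → Bool) (b : ℝ) :
    Fin k → ℝ := fun j => if j ∈ V ∧ s j then b ^ (1/γ₁) else b ^ (1/γ₂)

lemma dvec_pos {V : Finset (Fin k)} {γ₁ γ₂ b : ℝ} {s : Fin k → Bool} (hb : 0 < b) (j : Fin k) :
    0 < dvec V γ₁ γ₂ s b j := by
  unfold dvec; split <;> exact Real.rpow_pos_of_pos hb _

lemma vplus_dvec {V : Finset (Fin k)} {γ₁ γ₂ b : ℝ} {s : Fin k → Bool} {y : Fin k → ℝ}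
    (hb : 0 < b) (hy : y ∈ orth s) :
    vplus V (fun j => dvec V γ₁ γ₂ s b j * y j) =
      b ^ (1/γ₁) • phi V (b ^ (1/γ₂ - 1/γ₁)) y := by
  funext j
  have hyj := hy j
  have p1 : (0:ℝ) < b ^ (1/γ₁) := Real.rpow_pos_of_pos hb _
  have p2 : (0:ℝ) < b ^ (1/γ₂) := Real.rpow_pos_of_pos hb _
  simp only [vplus, phi, Pi.smul_apply, smul_eq_mul, dvec]
  by_cases hj : j ∈ V
  · cases hs : s j
    · rw [hs] at hyj; simp only [Bool.false_eq_true, if_false] at hyj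
      rw [if_pos hj, if_pos hj, if_neg (by simp [hs])]
      rw [max_eq_right (by nlinarith), max_eq_right hyj.le, mul_zero]
    · rw [hs] at hyj; simp only [if_true] at hyj
      rw [if_pos hj, if_pos hj, if_pos ⟨hj, by simp [hs]⟩]
      rw [max_eq_left (by nlinarith), max_eq_left hyj]
  · rw [if_neg hj, if_neg hj, if_neg (fun hc => hj hc.1)]
    rw [← mul_assoc, ← Real.rpow_add hb]
    congr 2
    ring

lemma vminus_dvec {V : Finset (Fin k)} {γ₁ γ₂ b : ℝ} {s : Fin k → Bool} {y : Fin k → ℝ}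
    (hb : 0 < b) (hy : y ∈ orth s) :
    vminus V (fun j => dvec V γ₁ γ₂ s b j * y j) = b ^ (1/γ₂) • vminus V y := by
  funext j
  have hyj := hy j
  have p1 : (0:ℝ) < b ^ (1/γ₁) := Real.rpow_pos_of_pos hb _
  have p2 : (0:ℝ) < b ^ (1/γ₂) := Real.rpow_pos_of_pos hb _
  simp only [vminus_apply, Pi.smul_apply, smul_eq_mul, dvec]
  by_cases hj : j ∈ V
  · cases hs : s j
    · rw [hs] at hyj; simp only [Bool.false_eq_true, if_false] at hyj
      rw [if_pos hj, if_pos hj, if_neg (by simp [hs])]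
      rw [max_eq_left (by nlinarith), max_eq_left (by linarith)]
      ring
    · rw [hs] at hyj; simp only [if_true] at hyj
      rw [if_pos hj, if_pos hj, if_pos ⟨hj, by simp [hs]⟩]
      rw [max_eq_right (by nlinarith), max_eq_right (by linarith), mul_zero]
  · rw [if_neg hj, if_neg hj, if_neg (fun hc => hj hc.1)]
    ring

lemma Ff_dvec {V : Finset (Fin k)} {Nm : MonNorm k} {γ₁ γ₂ C₁ C₂ b : ℝ}
    (hγ₁ : 0 < γ₁) (hγ₂ : 0 < γ₂) {s : Fin k → Bool} {y : Fin k → ℝ}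
    (hb : 0 < b) (hy : y ∈ orth s) :
    Ff V Nm γ₁ γ₂ C₁ C₂ (fun j => dvec V γ₁ γ₂ s b j * y j) =
      b * Hf V Nm γ₁ γ₂ C₁ C₂ (b ^ (1/γ₂ - 1/γ₁)) y := by
  have p1 : (0:ℝ) < b ^ (1/γ₁) := Real.rpow_pos_of_pos hb _
  have p2 : (0:ℝ) < b ^ (1/γ₂) := Real.rpow_pos_of_pos hb _
  unfold Ff Hf
  rw [vplus_dvec hb hy, vminus_dvec hb hy, Nm.smul_eq, Nm.smul_eq,
    abs_of_pos p1, abs_of_pos p2,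
    Real.mul_rpow p1.le (MN_nonneg Nm _), Real.mul_rpow p2.le (MN_nonneg Nm _),
    ← Real.rpow_mul hb.le, ← Real.rpow_mul hb.le,
    one_div_mul_cancel hγ₁.ne', one_div_mul_cancel hγ₂.ne', Real.rpow_one]
  ring

-- ### chunk 5
lemma diag_apply (v y : Fin k → ℝ) :
    Matrix.toLin' (Matrix.diagonal v) y = fun j => v j * y j := by
  funext j
  rw [Matrix.toLin'_apply]
  exact Matrix.mulVec_diagonal v y j

lemma image_eq {V : Finset (Fin k)} {Nm : MonNorm k} {γ₁ γ₂ C₁ C₂ b : ℝ}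
    (hγ₁ : 0 < γ₁) (hγ₂ : 0 < γ₂) (hb : 0 < b) (s : Fin k → Bool) :
    Aset V Nm γ₁ γ₂ C₁ C₂ b ∩ orth s =
      (Matrix.toLin' (Matrix.diagonal (dvec V γ₁ γ₂ s b))) ''
        (Bset V Nm γ₁ γ₂ C₁ C₂ (b ^ (1/γ₂ - 1/γ₁)) ∩ orth s) := by
  ext x
  constructor
  · rintro ⟨hxA, hxO⟩
    have hO' : (fun j => x j / dvec V γ₁ γ₂ s b j) ∈ orth s := by
      intro j
      have h := hxO j
      cases hs : s j <;> rw [hs] at h <;> simp only [Bool.false_eq_true, if_false, if_true] at h ⊢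
      · exact div_neg_of_neg_of_pos h (dvec_pos hb j)
      · exact div_nonneg h (dvec_pos hb j).le
    have hDy : (fun j => dvec V γ₁ γ₂ s b j * (x j / dvec V γ₁ γ₂ s b j)) = x := by
      funext j
      rw [mul_comm, div_mul_cancel₀ _ (dvec_pos hb j).ne']
    refine ⟨fun j => x j / dvec V γ₁ γ₂ s b j, ⟨?_, hO'⟩, ?_⟩
    · have heq := Ff_dvec hγ₁ hγ₂ hb hO' (V := V) (Nm := Nm) (C₁ := C₁) (C₂ := C₂)
      rw [hDy] at heq
      have hlt : b * Hf V Nm γ₁ γ₂ C₁ C₂ (b ^ (1/γ₂ - 1/γ₁)) (fun j => x j / dvec V γ₁ γ₂ s b j)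
          < b * 1 := by
        rw [mul_one, ← heq]; exact hxA
      exact (mul_lt_mul_iff_right₀ hb).1 hlt
    · rw [diag_apply]
      exact hDy
  · rintro ⟨y, ⟨hyB, hyO⟩, rfl⟩
    rw [diag_apply]
    refine ⟨?_, ?_⟩
    · show Ff V Nm γ₁ γ₂ C₁ C₂ _ < b
      rw [Ff_dvec hγ₁ hγ₂ hb hyO]
      calc b * Hf V Nm γ₁ γ₂ C₁ C₂ (b ^ (1/γ₂ - 1/γ₁)) y < b * 1 :=
            (mul_lt_mul_iff_right₀ hb).2 hyB
        _ = b := mul_one b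
    · intro j
      have h := hyO j
      cases hs : s j <;> rw [hs] at h <;> simp only [Bool.false_eq_true, if_false, if_true] at h ⊢
      · exact mul_neg_of_pos_of_neg (dvec_pos hb j) h
      · exact mul_nonneg (dvec_pos hb j).le h

lemma vol_image (v : Fin k → ℝ) (S : Set (Fin k → ℝ)) :
    volume ((Matrix.toLin' (Matrix.diagonal v)) '' S) =
      ENNReal.ofReal |∏ j, v j| * volume S := by
  rw [Measure.addHaar_image_linearMap, LinearMap.det_toLin', Matrix.det_diagonal]

lemma prod_dvec {V : Finset (Fin k)} {γ₁ γ₂ b : ℝ} {s : Fin k → Bool} (hb : 0 < b) :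
    ∏ j, dvec V γ₁ γ₂ s b j = b ^ (∑ j, if j ∈ V ∧ s j then 1/γ₁ else 1/γ₂) := by
  rw [Real.rpow_sum_of_pos hb]
  refine Finset.prod_congr rfl fun j _ => ?_
  unfold dvec
  split <;> rfl

lemma exponent_sum (V : Finset (Fin k)) (s : Fin k → Bool) (i₁ i₂ : ℝ) :
    (∑ j : Fin k, if j ∈ V ∧ s j then i₁ else i₂)
      = ((V.card : ℝ) * i₁ + ((k : ℝ) - V.card) * i₂)
        + ((V.filter fun j => s j = false).card : ℝ) * (i₂ - i₁) := by
  classical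
  have hsplit :
      (∑ j : Fin k, if j ∈ V ∧ s j then i₁ else i₂)
        = (∑ j ∈ univ \ V, if j ∈ V ∧ s j then i₁ else i₂)
          + ∑ j ∈ V, (if j ∈ V ∧ s j then i₁ else i₂) :=
    (Finset.sum_sdiff (Finset.subset_univ V)).symm
  have h1 : (∑ j ∈ univ \ V, if j ∈ V ∧ s j then i₁ else i₂) = ((k : ℝ) - V.card) * i₂ := by
    rw [Finset.sum_congr rfl (fun j hj => ?_), Finset.sum_const]
    · rw [nsmul_eq_mul, Finset.card_sdiff_of_subset (Finset.subset_univ V), Finset.card_univ,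
        Fintype.card_fin, Nat.cast_sub (by simpa using Finset.card_le_univ V)]
    · rw [if_neg]
      rintro ⟨hjV, -⟩
      exact (Finset.mem_sdiff.1 hj).2 hjV
  have h2 : (∑ j ∈ V, if j ∈ V ∧ s j then i₁ else i₂)
      = ∑ j ∈ V, (if s j = true then i₁ else i₂) := by
    refine Finset.sum_congr rfl fun j hj => ?_
    by_cases hs : s j = true <;> simp [hj, hs]
  have h3 : (∑ j ∈ V, if s j = true then i₁ else i₂)
      = ((V.filter fun j => s j = true).card : ℝ) * i₁
        + ((V.filter fun j => ¬ (s j = true)).card : ℝ) * i₂ := by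
    rw [Finset.sum_ite, Finset.sum_const, Finset.sum_const, nsmul_eq_mul, nsmul_eq_mul]
  have h4 : (V.filter fun j => s j = true).card + (V.filter fun j => ¬ (s j = true)).card
      = V.card := Finset.card_filter_add_card_filter_not _
  have h5 : (V.filter fun j => ¬ (s j = true)) = (V.filter fun j => s j = false) := by
    refine Finset.filter_congr fun j _ => ?_
    cases s j <;> simp
  have h6 : ((V.filter fun j => s j = true).card : ℝ)
      = (V.card : ℝ) - ((V.filter fun j => s j = false).card : ℝ) := by
    rw [← h5]
    have := congrArg (fun n : ℕ => (n : ℝ)) h4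
    push_cast at this
    linarith
  rw [hsplit, h1, h2, h3, h5, h6]
  ring

lemma monLimit (T : ℝ → Set (Fin k → ℝ))
    (hmono : ∀ r r' : ℝ, 0 ≤ r → r ≤ r' → T r' ⊆ T r)
    (hU : ∀ y ∈ T 0, ∃ r > 0, y ∈ T r)
    (hfin : volume (T 0) ≠ ⊤) :
    Tendsto (fun r => (volume (T r)).toReal) (nhdsWithin (0:ℝ) (Set.Ioi 0))
      (nhds (volume (T 0)).toReal) := by
  have hsub : ∀ r : ℝ, 0 ≤ r → T r ⊆ T 0 := fun r hr => hmono 0 r le_rfl hr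
  have hmon : Monotone (fun n : ℕ => T (1 / ((n : ℝ) + 1))) := by
    intro n m hnm
    refine hmono _ _ (by positivity) ?_
    have h1 : (0:ℝ) < (n:ℝ) + 1 := by positivity
    refine one_div_le_one_div_of_le h1 (by exact_mod_cast by omega)
  have hUeq : (⋃ n : ℕ, T (1 / ((n : ℝ) + 1))) = T 0 := by
    apply subset_antisymm
    · exact Set.iUnion_subset fun n => hsub _ (by positivity)
    · intro y hy
      obtain ⟨r, hr, hyr⟩ := hU y hy
      obtain ⟨n, hn⟩ := exists_nat_one_div_lt hr
      exact Set.mem_iUnion.2 ⟨n, hmono _ _ (by positivity) hn.le hyr⟩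
  have htend := tendsto_measure_iUnion_atTop (μ := volume) hmon
  rw [hUeq] at htend
  have htoReal : Tendsto (fun n : ℕ => (volume (T (1 / ((n : ℝ) + 1)))).toReal) atTop
      (nhds (volume (T 0)).toReal) := (ENNReal.tendsto_toReal hfin).comp htend
  rw [Metric.tendsto_nhds]
  intro ε hε
  have hev : ∀ᶠ n : ℕ in atTop,
      (volume (T 0)).toReal - ε < (volume (T (1 / ((n : ℝ) + 1)))).toReal :=
    htoReal.eventually_const_lt (by linarith)
  obtain ⟨n, hn⟩ := hev.exists
  filter_upwards [Ioc_mem_nhdsGT (show (0:ℝ) < 1 / ((n : ℝ) + 1) by positivity)]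
    with r hr
  have hfinr : volume (T r) ≠ ⊤ :=
    (lt_of_le_of_lt (measure_mono (hsub r hr.1.le)) (lt_top_iff_ne_top.2 hfin)).ne
  have hle : (volume (T r)).toReal ≤ (volume (T 0)).toReal :=
    ENNReal.toReal_mono hfin (measure_mono (hsub r hr.1.le))
  have hge : (volume (T (1 / ((n : ℝ) + 1)))).toReal ≤ (volume (T r)).toReal :=
    ENNReal.toReal_mono hfinr (measure_mono (hmono r _ hr.1.le hr.2))
  rw [Real.dist_eq, abs_lt]
  constructor <;> linarith

-- chunk 7 : Bset monotonicity in r and the union property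
lemma Bset_antitone (V : Finset (Fin k)) (Nm : MonNorm k) {γ₁ γ₂ C₁ C₂ : ℝ}
    (hγ₁ : 0 < γ₁) (hC₁ : 0 < C₁) {r r' : ℝ} (hr : 0 ≤ r) (hrr : r ≤ r') :
    Bset V Nm γ₁ γ₂ C₁ C₂ r' ⊆ Bset V Nm γ₁ γ₂ C₁ C₂ r := by
  intro y hy
  have hN : Nm.N (phi V r y) ≤ Nm.N (phi V r' y) := by
    refine Nm.mono _ _ fun j => ?_
    unfold phi
    by_cases hj : j ∈ V
    · simp [hj]
    · simp only [hj, if_false, abs_mul]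
      have habs : |r| ≤ |r'| := by
        rw [abs_of_nonneg hr, abs_of_nonneg (hr.trans hrr)]
        exact hrr
      exact mul_le_mul_of_nonneg_right habs (abs_nonneg _)
  have h2 : Hf V Nm γ₁ γ₂ C₁ C₂ r y ≤ Hf V Nm γ₁ γ₂ C₁ C₂ r' y := by
    unfold Hf
    have := Real.rpow_le_rpow (MN_nonneg Nm _) hN hγ₁.le
    nlinarith
  exact lt_of_le_of_lt h2 hy

lemma Bset_exists_pos (V : Finset (Fin k)) (Nm : MonNorm k) {γ₁ γ₂ C₁ C₂ : ℝ}
    (hγ₁ : 0 < γ₁) (hγ₂ : 0 < γ₂) {y : Fin k → ℝ}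
    (hy : y ∈ Bset V Nm γ₁ γ₂ C₁ C₂ 0) : ∃ r > 0, y ∈ Bset V Nm γ₁ γ₂ C₁ C₂ r := by
  have hcont : Continuous fun r : ℝ => Hf V Nm γ₁ γ₂ C₁ C₂ r y := by
    have hphi : Continuous fun r : ℝ => phi V r y := by
      refine continuous_pi fun j => ?_
      by_cases hj : j ∈ V
      · simpa [phi, hj] using continuous_const
      · simp only [phi, hj, ↓reduceIte]; exact continuous_id.mul continuous_const
    refine Continuous.add ?_ continuous_const
    exact continuous_const.mul ((Real.continuous_rpow_const hγ₁.le).comp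
      ((MN_cont Nm).comp hphi))
  have h1 : ∀ᶠ r in nhds (0:ℝ), Hf V Nm γ₁ γ₂ C₁ C₂ r y < 1 :=
    (hcont.tendsto 0).eventually_lt_const hy
  have h2 : ∀ᶠ r in nhdsWithin (0:ℝ) (Set.Ioi 0), Hf V Nm γ₁ γ₂ C₁ C₂ r y < 1 ∧ 0 < r :=
    (h1.filter_mono nhdsWithin_le_nhds).and self_mem_nhdsWithin
  obtain ⟨r, hr1, hr2⟩ := h2.exists
  exact ⟨r, hr2, hr1⟩

-- ### chunk 8
noncomputable def msc (V : Finset (Fin k)) (s : Fin k → Bool) : ℝ :=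
  ((V.filter fun j => s j = false).card : ℝ)

lemma msc_nonneg (V : Finset (Fin k)) (s : Fin k → Bool) : 0 ≤ msc V s := Nat.cast_nonneg _

noncomputable def cconst (V : Finset (Fin k)) (Nm : MonNorm k) (γ₁ γ₂ C₁ C₂ : ℝ) : ℝ :=
  ∑ s : Fin k → Bool, (0:ℝ) ^ (msc V s * (1/γ₂ - 1/γ₁)) *
    (volume (Bset V Nm γ₁ γ₂ C₁ C₂ ((0:ℝ) ^ (1/γ₂ - 1/γ₁)) ∩ orth s)).toReal

lemma Bfin (V : Finset (Fin k)) (Nm : MonNorm k) {γ₁ γ₂ C₁ C₂ : ℝ}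
    (hγ₁ : 0 < γ₁) (hγ₂ : 0 < γ₂) (hC₁ : 0 < C₁) (hC₂ : 0 < C₂) (r : ℝ) (s : Fin k → Bool) :
    volume (Bset V Nm γ₁ γ₂ C₁ C₂ r ∩ orth s) ≠ ⊤ :=
  vol_ne_top_of_ball (Set.inter_subset_left.trans
    (Bset_subset_ball V Nm hγ₁ hγ₂ hC₁ hC₂ r))

lemma vol_Aset_eq (V : Finset (Fin k)) (Nm : MonNorm k) {γ₁ γ₂ : ℝ} (C₁ C₂ : ℝ)
    (hγ₁ : 0 < γ₁) (hγ₂ : 0 < γ₂) (b : ℝ) :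
    volume (Aset V Nm γ₁ γ₂ C₁ C₂ b)
      = ∑ s : Fin k → Bool, volume (Aset V Nm γ₁ γ₂ C₁ C₂ b ∩ orth s) := by
  have h : Aset V Nm γ₁ γ₂ C₁ C₂ b = ⋃ s : Fin k → Bool, (Aset V Nm γ₁ γ₂ C₁ C₂ b ∩ orth s) := by
    rw [← Set.inter_iUnion, iUnion_orth, Set.inter_univ]
  have hd : Pairwise (Function.onFun Disjoint fun s : Fin k → Bool =>
      Aset V Nm γ₁ γ₂ C₁ C₂ b ∩ orth s) := fun s t hst =>
    (disjoint_orth hst).mono Set.inter_subset_right Set.inter_subset_right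
  have hm : ∀ s : Fin k → Bool, MeasurableSet (Aset V Nm γ₁ γ₂ C₁ C₂ b ∩ orth s) := fun s =>
    ((isOpen_Aset V Nm C₁ C₂ hγ₁ hγ₂ b).measurableSet).inter (measurableSet_orth s)
  conv_lhs => rw [h]
  rw [measure_iUnion hd hm, tsum_fintype]

lemma g_eq (V : Finset (Fin k)) (Nm : MonNorm k) {γ₁ γ₂ C₁ C₂ : ℝ}
    (hγ₁ : 0 < γ₁) (hγ₂ : 0 < γ₂) (hC₁ : 0 < C₁) (hC₂ : 0 < C₂) {b : ℝ} (hb : 0 < b) :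
    b ^ (-((V.card : ℝ) * (1/γ₁) + ((k : ℝ) - V.card) * (1/γ₂)))
        * (volume (Aset V Nm γ₁ γ₂ C₁ C₂ b)).toReal
      = ∑ s : Fin k → Bool, b ^ (msc V s * (1/γ₂ - 1/γ₁)) *
          (volume (Bset V Nm γ₁ γ₂ C₁ C₂ (b ^ (1/γ₂ - 1/γ₁)) ∩ orth s)).toReal := by
  have hAfin : ∀ s : Fin k → Bool, volume (Aset V Nm γ₁ γ₂ C₁ C₂ b ∩ orth s) ≠ ⊤ := fun s =>
    vol_ne_top_of_ball (Set.inter_subset_left.trans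
      (Aset_subset_ball V Nm hγ₁ hγ₂ hC₁ hC₂ hb))
  rw [vol_Aset_eq V Nm C₁ C₂ hγ₁ hγ₂ b, ENNReal.toReal_sum (fun s _ => hAfin s),
    Finset.mul_sum]
  refine Finset.sum_congr rfl fun s _ => ?_
  rw [image_eq hγ₁ hγ₂ hb s, vol_image, prod_dvec hb, exponent_sum V s (1/γ₁) (1/γ₂),
    abs_of_pos (Real.rpow_pos_of_pos hb _), ENNReal.toReal_mul,
    ENNReal.toReal_ofReal (Real.rpow_nonneg hb.le _), ← mul_assoc, ← Real.rpow_add hb]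
  congr 2
  unfold msc
  ring

lemma psi_tendsto (V : Finset (Fin k)) (Nm : MonNorm k) {γ₁ γ₂ C₁ C₂ : ℝ}
    (hγ₁ : 0 < γ₁) (hγ₂ : 0 < γ₂) (hγ : γ₂ ≤ γ₁) (hC₁ : 0 < C₁) (hC₂ : 0 < C₂)
    (s : Fin k → Bool) :
    Tendsto (fun b : ℝ =>
        (volume (Bset V Nm γ₁ γ₂ C₁ C₂ (b ^ (1/γ₂ - 1/γ₁)) ∩ orth s)).toReal)
      (nhdsWithin (0:ℝ) (Set.Ioi 0))
      (nhds ((volume (Bset V Nm γ₁ γ₂ C₁ C₂ ((0:ℝ) ^ (1/γ₂ - 1/γ₁)) ∩ orth s)).toReal)) := by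
  have hθ : 0 ≤ 1/γ₂ - 1/γ₁ := by
    have := one_div_le_one_div_of_le hγ₂ hγ
    linarith
  by_cases hθ0 : 1/γ₂ - 1/γ₁ = 0
  · simp only [hθ0, Real.rpow_zero]
    exact tendsto_const_nhds
  · have hθpos : 0 < 1/γ₂ - 1/γ₁ := lt_of_le_of_ne hθ (Ne.symm hθ0)
    have hlim : Tendsto (fun r : ℝ =>
        (volume (Bset V Nm γ₁ γ₂ C₁ C₂ r ∩ orth s)).toReal)
        (nhdsWithin (0:ℝ) (Set.Ioi 0))
        (nhds ((volume (Bset V Nm γ₁ γ₂ C₁ C₂ 0 ∩ orth s)).toReal)) := by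
      refine monLimit _ ?_ ?_ ?_
      · intro r r' hr hrr
        exact Set.inter_subset_inter_left _ (Bset_antitone V Nm hγ₁ hC₁ hr hrr)
      · rintro y ⟨hyB, hyO⟩
        obtain ⟨r, hr, hyr⟩ := Bset_exists_pos V Nm hγ₁ hγ₂ hyB
        exact ⟨r, hr, hyr, hyO⟩
      · exact Bfin V Nm hγ₁ hγ₂ hC₁ hC₂ 0 s
    have hmap : Tendsto (fun b : ℝ => b ^ (1/γ₂ - 1/γ₁)) (nhdsWithin (0:ℝ) (Set.Ioi 0))
        (nhdsWithin (0:ℝ) (Set.Ioi 0)) := by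
      rw [tendsto_nhdsWithin_iff]
      constructor
      · have hc := (Real.continuousAt_rpow_const 0 (1/γ₂ - 1/γ₁) (Or.inr hθ)).tendsto
        rw [Real.zero_rpow hθ0] at hc
        exact hc.mono_left nhdsWithin_le_nhds
      · filter_upwards [self_mem_nhdsWithin] with b hb
        exact Real.rpow_pos_of_pos hb _
    have := hlim.comp hmap
    rw [Real.zero_rpow hθ0]
    exact this

lemma g_tendsto (V : Finset (Fin k)) (Nm : MonNorm k) {γ₁ γ₂ C₁ C₂ : ℝ}
    (hγ₁ : 0 < γ₁) (hγ₂ : 0 < γ₂) (hγ : γ₂ ≤ γ₁) (hC₁ : 0 < C₁) (hC₂ : 0 < C₂) :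
    Tendsto (fun b : ℝ => ∑ s : Fin k → Bool, b ^ (msc V s * (1/γ₂ - 1/γ₁)) *
          (volume (Bset V Nm γ₁ γ₂ C₁ C₂ (b ^ (1/γ₂ - 1/γ₁)) ∩ orth s)).toReal)
      (nhdsWithin (0:ℝ) (Set.Ioi 0)) (nhds (cconst V Nm γ₁ γ₂ C₁ C₂)) := by
  have hθ : 0 ≤ 1/γ₂ - 1/γ₁ := by
    have := one_div_le_one_div_of_le hγ₂ hγ
    linarith
  refine tendsto_finset_sum _ fun s _ => Tendsto.mul ?_ (psi_tendsto V Nm hγ₁ hγ₂ hγ hC₁ hC₂ s)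
  exact ((Real.continuousAt_rpow_const 0 _ (Or.inr (mul_nonneg (msc_nonneg V s) hθ))).tendsto
    ).mono_left nhdsWithin_le_nhds

lemma cconst_pos (V : Finset (Fin k)) (Nm : MonNorm k) {γ₁ γ₂ C₁ C₂ : ℝ}
    (hγ₁ : 0 < γ₁) (hγ₂ : 0 < γ₂) (hC₁ : 0 < C₁) (hC₂ : 0 < C₂) :
    0 < cconst V Nm γ₁ γ₂ C₁ C₂ := by
  have hterm_nonneg : ∀ s : Fin k → Bool, 0 ≤ (0:ℝ) ^ (msc V s * (1/γ₂ - 1/γ₁)) *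
      (volume (Bset V Nm γ₁ γ₂ C₁ C₂ ((0:ℝ) ^ (1/γ₂ - 1/γ₁)) ∩ orth s)).toReal :=
    fun s => mul_nonneg (Real.rpow_nonneg le_rfl _) ENNReal.toReal_nonneg
  set ρ : ℝ := (0:ℝ) ^ (1/γ₂ - 1/γ₁) with hρ
  set s₀ : Fin k → Bool := fun _ => true with hs₀
  have h0mem : (0 : Fin k → ℝ) ∈ Bset V Nm γ₁ γ₂ C₁ C₂ ρ := by
    show Hf V Nm γ₁ γ₂ C₁ C₂ ρ 0 < 1
    have hphi0 : phi V ρ (0 : Fin k → ℝ) = 0 := by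
      funext j; by_cases hj : j ∈ V <;> simp [phi, hj]
    have hvm0 : vminus V (0 : Fin k → ℝ) = 0 := by
      funext j; by_cases hj : j ∈ V <;> simp [vminus, vplus, hj]
    unfold Hf
    rw [hphi0, hvm0, MN_zero, Real.zero_rpow hγ₁.ne', Real.zero_rpow hγ₂.ne']
    norm_num
  obtain ⟨ε, hε, hball⟩ := Metric.isOpen_iff.1 (isOpen_Bset V Nm C₁ C₂ hγ₁ hγ₂ ρ) 0 h0mem
  set m : ℝ := min ε 1 / 2 with hm
  have hmpos : 0 < m := by
    have : (0:ℝ) < min ε 1 := lt_min hε one_pos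
    positivity
  have hbox : (Set.pi Set.univ fun _ : Fin k => Set.Ico (0:ℝ) m) ⊆
      Bset V Nm γ₁ γ₂ C₁ C₂ ρ ∩ orth s₀ := by
    intro x hx
    constructor
    · refine hball ?_
      rw [Metric.mem_ball, dist_zero_right]
      have hle : ‖x‖ ≤ m := by
        rw [pi_norm_le_iff_of_nonneg hmpos.le]
        intro j
        have := hx j (Set.mem_univ j)
        rw [Real.norm_eq_abs, abs_of_nonneg this.1]
        exact this.2.le
      have hmlt : m < ε := by
        have h1 := min_le_left ε 1
        rw [hm]
        linarith
      linarith
    · intro j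
      simp only [hs₀, if_true]
      exact (hx j (Set.mem_univ j)).1
  have hvolbox : (0:ENNReal) < volume (Set.pi Set.univ fun _ : Fin k => Set.Ico (0:ℝ) m) := by
    rw [volume_pi_pi]
    refine CanonicallyOrderedAdd.prod_pos.2 fun j _ => ?_
    rw [Real.volume_Ico]
    simpa using ENNReal.ofReal_pos.2 (by linarith)
  have hpos : 0 < (volume (Bset V Nm γ₁ γ₂ C₁ C₂ ρ ∩ orth s₀)).toReal := by
    refine ENNReal.toReal_pos ?_ (Bfin V Nm hγ₁ hγ₂ hC₁ hC₂ ρ s₀)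
    exact (lt_of_lt_of_le hvolbox (measure_mono hbox)).ne'
  have hms0 : msc V s₀ = 0 := by
    unfold msc
    rw [hs₀]
    simp
  have hterm : (0:ℝ) ^ (msc V s₀ * (1/γ₂ - 1/γ₁)) *
      (volume (Bset V Nm γ₁ γ₂ C₁ C₂ ρ ∩ orth s₀)).toReal > 0 := by
    rw [hms0, zero_mul, Real.rpow_zero, one_mul]
    exact hpos
  calc (0:ℝ) < _ := hterm
    _ ≤ cconst V Nm γ₁ γ₂ C₁ C₂ :=
      Finset.single_le_sum (fun s _ => hterm_nonneg s) (Finset.mem_univ s₀)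

end Stmt15

open Stmt15

/-- small-ball probability asymptotics. There is a constant `c > 0`,
depending only on the geometry (not on the density `p_X`), such that
`b^{−(k₊/γ₁+(k−k₊)/γ₂)} P(C₁‖(X)_{V+}‖^{γ₁} + C₂‖(X)_{V−}‖^{γ₂} < b) → c · p_X(0)`
as `b → 0⁺`. -/
theorem stmt_15 {k : ℕ} (V : Finset (Fin k)) (Nm : MonNorm k)
    (γ₁ γ₂ C₁ C₂ : ℝ)
    (hγ₂0 : 0 < γ₂) (hγ : γ₂ ≤ γ₁) (hγ₁1 : γ₁ ≤ 1)
    (hC₁ : 0 < C₁) (hC₂ : 0 < C₂) :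
    ∃ c : ℝ, 0 < c ∧
      ∀ (Ω : Type) (_ : MeasurableSpace Ω) (P : Measure Ω), IsProbabilityMeasure P →
        ∀ (X : Ω → (Fin k → ℝ)), Measurable X →
          ∀ p : (Fin k → ℝ) → ℝ,
            Measure.map X P = volume.withDensity (fun y => ENNReal.ofReal (p y)) →
            ContinuousAt p 0 → 0 < p 0 →
            (0 : Fin k → ℝ) ∈ interior (Function.support p) →
            Tendsto (fun b : ℝ =>
                b ^ (-((V.card : ℝ) / γ₁ + ((k : ℝ) - V.card) / γ₂)) *
                  (P {ω | C₁ * Nm.N (vplus V (X ω)) ^ γ₁ +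
                          C₂ * Nm.N (vminus V (X ω)) ^ γ₂ < b}).toReal)
              (nhdsWithin 0 (Set.Ioi 0)) (nhds (c * p 0)) := by
  have hγ₁0 : 0 < γ₁ := lt_of_lt_of_le hγ₂0 hγ
  refine ⟨cconst V Nm γ₁ γ₂ C₁ C₂, cconst_pos V Nm hγ₁0 hγ₂0 hC₁ hC₂, ?_⟩
  intro Ω inst P hP X hX p hmap hcontp hp0 _hint
  have hAmeas : ∀ b : ℝ, MeasurableSet (Aset V Nm γ₁ γ₂ C₁ C₂ b) := fun b =>
    (isOpen_Aset V Nm C₁ C₂ hγ₁0 hγ₂0 b).measurableSet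
  have hPA : ∀ b : ℝ,
      P {ω | C₁ * Nm.N (vplus V (X ω)) ^ γ₁ + C₂ * Nm.N (vminus V (X ω)) ^ γ₂ < b}
        = (Measure.map X P) (Aset V Nm γ₁ γ₂ C₁ C₂ b) := by
    intro b
    rw [show {ω | C₁ * Nm.N (vplus V (X ω)) ^ γ₁ + C₂ * Nm.N (vminus V (X ω)) ^ γ₂ < b}
        = X ⁻¹' (Aset V Nm γ₁ γ₂ C₁ C₂ b) from rfl]
    exact (Measure.map_apply hX (hAmeas b)).symm
  have hprob : IsProbabilityMeasure (Measure.map X P) := Measure.isProbabilityMeasure_map hX.aemeasurable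
  set c := cconst V Nm γ₁ γ₂ C₁ C₂ with hc
  have hcpos : 0 < c := cconst_pos V Nm hγ₁0 hγ₂0 hC₁ hC₂
  rw [Metric.tendsto_nhds]
  intro ε hε
  set ε' := min (ε / (2 * (c + 1 + p 0))) (min 1 (p 0)) with hε'def
  have hε' : 0 < ε' := lt_min (by positivity) (lt_min one_pos hp0)
  have hε'le : ε' ≤ ε / (2 * (c + 1 + p 0)) := min_le_left _ _
  have hε'le1 : ε' ≤ 1 := (min_le_right _ _).trans (min_le_left _ _)
  have hε'lep : ε' ≤ p 0 := (min_le_right _ _).trans (min_le_right _ _)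
  obtain ⟨δ, hδ, hcball⟩ := Metric.continuousAt_iff.1 hcontp ε' hε'
  have hev2 := (Metric.tendsto_nhds.1 (g_tendsto V Nm hγ₁0 hγ₂0 hγ hC₁ hC₂)) ε' hε'
  filter_upwards [Aset_eventually_small V Nm hγ₁0 hγ₂0 hC₁ hC₂ hδ, hev2,
    self_mem_nhdsWithin] with b hsmall hgb hbpos
  rw [Set.mem_Ioi] at hbpos
  have hexpb : b ^ (-((V.card : ℝ) / γ₁ + ((k : ℝ) - V.card) / γ₂))
      = b ^ (-((V.card : ℝ) * (1/γ₁) + ((k : ℝ) - V.card) * (1/γ₂))) := by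
    rw [mul_one_div, mul_one_div]
  rw [hPA b, hexpb]
  set A := Aset V Nm γ₁ γ₂ C₁ C₂ b with hA
  set gb := ∑ s : Fin k → Bool, b ^ (msc V s * (1/γ₂ - 1/γ₁)) *
      (volume (Bset V Nm γ₁ γ₂ C₁ C₂ (b ^ (1/γ₂ - 1/γ₁)) ∩ orth s)).toReal with hgbdef
  have hgeq : b ^ (-((V.card : ℝ) * (1/γ₁) + ((k : ℝ) - V.card) * (1/γ₂)))
      * (volume A).toReal = gb := g_eq V Nm hγ₁0 hγ₂0 hC₁ hC₂ hbpos
  have hvAfin : volume A ≠ ⊤ :=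
    vol_ne_top_of_ball (Aset_subset_ball V Nm hγ₁0 hγ₂0 hC₁ hC₂ hbpos)
  have hμfin : (Measure.map X P) A ≠ ⊤ := measure_ne_top _ _
  have hμrepr : (Measure.map X P) A = ∫⁻ x in A, ENNReal.ofReal (p x) ∂volume := by
    rw [hmap, withDensity_apply _ (hAmeas b)]
  have hpbound : ∀ x ∈ A, p 0 - ε' ≤ p x ∧ p x ≤ p 0 + ε' := by
    intro x hx
    have hxball := hsmall hx
    rw [Metric.mem_ball] at hxball
    have hd := hcball hxball
    rw [Real.dist_eq] at hd
    have := abs_lt.1 hd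
    constructor <;> linarith [this.1, this.2]
  have hup : (Measure.map X P) A ≤ ENNReal.ofReal (p 0 + ε') * volume A := by
    rw [hμrepr, ← setLIntegral_const]
    refine lintegral_mono_ae ((ae_restrict_iff' (hAmeas b)).2 (ae_of_all _ fun x hx => ?_))
    exact ENNReal.ofReal_le_ofReal (hpbound x hx).2
  have hlo : ENNReal.ofReal (p 0 - ε') * volume A ≤ (Measure.map X P) A := by
    rw [hμrepr, ← setLIntegral_const]
    refine lintegral_mono_ae ((ae_restrict_iff' (hAmeas b)).2 (ae_of_all _ fun x hx => ?_))
    exact ENNReal.ofReal_le_ofReal (hpbound x hx).1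
  have hup' : ((Measure.map X P) A).toReal ≤ (p 0 + ε') * (volume A).toReal := by
    have h := ENNReal.toReal_mono (ENNReal.mul_ne_top ENNReal.ofReal_ne_top hvAfin) hup
    rwa [ENNReal.toReal_mul, ENNReal.toReal_ofReal (by positivity)] at h
  have hlo' : (p 0 - ε') * (volume A).toReal ≤ ((Measure.map X P) A).toReal := by
    have h := ENNReal.toReal_mono hμfin hlo
    rwa [ENNReal.toReal_mul, ENNReal.toReal_ofReal (by linarith)] at h
  have hbpow : 0 < b ^ (-((V.card : ℝ) * (1/γ₁) + ((k : ℝ) - V.card) * (1/γ₂))) :=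
    Real.rpow_pos_of_pos hbpos _
  set β := b ^ (-((V.card : ℝ) * (1/γ₁) + ((k : ℝ) - V.card) * (1/γ₂))) with hβ
  have hgb0 : 0 ≤ gb := by
    rw [← hgeq]
    exact mul_nonneg hbpow.le ENNReal.toReal_nonneg
  have h1 : β * ((Measure.map X P) A).toReal ≤ (p 0 + ε') * gb := by
    rw [← hgeq]
    have h := mul_le_mul_of_nonneg_left hup' hbpow.le
    linarith [h]
  have h2 : (p 0 - ε') * gb ≤ β * ((Measure.map X P) A).toReal := by
    rw [← hgeq]
    have h := mul_le_mul_of_nonneg_left hlo' hbpow.le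
    linarith [h]
  rw [Real.dist_eq] at hgb
  have h3 := abs_lt.1 hgb
  have hkey : ε' * (c + 1 + p 0) ≤ ε / 2 := by
    have hd : (0:ℝ) < c + 1 + p 0 := by linarith
    calc ε' * (c + 1 + p 0) ≤ (ε / (2 * (c + 1 + p 0))) * (c + 1 + p 0) :=
          mul_le_mul_of_nonneg_right hε'le hd.le
      _ = ε / 2 := by field_simp
  have e1 : p 0 * (gb - c) ≤ p 0 * ε' := mul_le_mul_of_nonneg_left h3.2.le hp0.le
  have e2 : p 0 * (c - gb) ≤ p 0 * ε' := mul_le_mul_of_nonneg_left (by linarith) hp0.le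
  have e3 : gb ≤ c + 1 := by linarith
  have e4 : ε' * gb ≤ ε' * (c + 1) := mul_le_mul_of_nonneg_left e3 hε'.le
  rw [Real.dist_eq, abs_lt]
  constructor
  · linarith [h1, h2, e1, e2, e4, hkey, hε]
  · linarith [h1, h2, e1, e2, e4, hkey, hε]
end

section
/- Suppose the norm ‖·‖ on ℝ^k satisfies Assumption 1, V ⊊ {1,…,k} is a proper subset, γ ∈ (0,1], C > 0, and b > 0. Let A_V := {x ∈ ℝ^k : x_j = 0 for all j ∉ V and x_j ≥ 0 for all j ∈ V}, and let x₁,…,x_n ∈ ℝ^k be design points none of which lies in A_V. Define f₁*(x) := min{ C‖(x)_{V+}‖^γ, b } and f₂*(x) := b for x ∈ A_V and f₂*(x) := min{ C‖(x)_{V+}‖^γ, b } for x ∉ A_V. Then f₁* ∈ Λ₊,V(γ,C), f₂* ∈ Λ₊,V(0,∞), f₂*(0) − f₁*(0) = b, and f₂*(x_i) = f₁*(x_i) for every i = 1,…,n; consequently the inverse ordered modulus satisfies ω⁻¹(b, Λ₊,V(γ,C), Λ₊,V(0,∞)) = 0. -/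
open MeasureTheory Filter Finset
open scoped Classical

/-- The class `Λ₊,V(0,∞)` of functions that are merely coordinatewise nondecreasing
with respect to the coordinates in `V`. -/
def MonoClass {k : ℕ} (V : Finset (Fin k)) : Set ((Fin k → ℝ) → ℝ) :=
  {f | MonoV V f}

/-- Inverse ordered modulus of continuity (with `σ ≡ 1`) for the functional `f ↦ f(0)`. -/
noncomputable def invMod {k : ℕ} (n : ℕ) (x : Fin n → (Fin k → ℝ)) (b : ℝ)
    (F G : Set ((Fin k → ℝ) → ℝ)) : ℝ :=
  sInf {r : ℝ | ∃ f ∈ F, ∃ g ∈ G, g 0 - f 0 = b ∧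
    r = Real.sqrt (∑ i, (g (x i) - f (x i)) ^ 2)}

/-- The set `A_V = {x : x_j = 0 ∀ j ∉ V, x_j ≥ 0 ∀ j ∈ V}`. -/
def Aset {k : ℕ} (V : Finset (Fin k)) : Set (Fin k → ℝ) :=
  {x | (∀ j ∉ V, x j = 0) ∧ ∀ j ∈ V, 0 ≤ x j}

section Aux
open scoped NNReal

variable {k : ℕ}

lemma MonNorm.zero (Nm : MonNorm k) : Nm.N 0 = 0 := by
  have h := Nm.smul_eq 0 0
  simpa using h

lemma MonNorm.nonneg (Nm : MonNorm k) (x : Fin k → ℝ) : 0 ≤ Nm.N x := by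
  have hneg : Nm.N (-x) = Nm.N x := by
    have := Nm.smul_eq (-1) x
    simpa using this
  have h := Nm.add_le x (-x)
  rw [add_neg_cancel, Nm.zero, hneg] at h
  linarith

lemma MonNorm.abs_sub (Nm : MonNorm k) (x z : Fin k → ℝ) :
    |Nm.N x - Nm.N z| ≤ Nm.N (x - z) := by
  have hneg : ∀ w : Fin k → ℝ, Nm.N (-w) = Nm.N w := by
    intro w; have := Nm.smul_eq (-1) w; simpa using this
  rw [abs_sub_le_iff]
  constructor
  · have h := Nm.add_le z (x - z)
    simp only [add_sub_cancel] at h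
    linarith
  · have h := Nm.add_le x (z - x)
    have : Nm.N (z - x) = Nm.N (x - z) := by
      rw [← hneg (x - z)]; ring_nf
    simp only [add_sub_cancel] at h
    linarith

lemma rpow_sub_le_sub_rpow {a c γ : ℝ} (ha : 0 ≤ a) (hac : a ≤ c)
    (hγ0 : 0 ≤ γ) (hγ1 : γ ≤ 1) : c ^ γ - a ^ γ ≤ (c - a) ^ γ := by
  have hca : 0 ≤ c - a := sub_nonneg.2 hac
  have h := NNReal.rpow_add_le_add_rpow (⟨a, ha⟩ : ℝ≥0) (⟨c - a, hca⟩ : ℝ≥0) hγ0 hγ1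
  have hsum : ((⟨a, ha⟩ : ℝ≥0) + ⟨c - a, hca⟩) = (⟨c, ha.trans hac⟩ : ℝ≥0) := by
    ext; simp
  erw [hsum] at h
  have h' : (c : ℝ) ^ γ ≤ a ^ γ + (c - a) ^ γ := by
    have := (NNReal.coe_le_coe).2 h
    simp only [NNReal.coe_add] at this
    erw [NNReal.coe_rpow, NNReal.coe_rpow, NNReal.coe_rpow] at this
    exact this
  linarith

lemma abs_rpow_sub_rpow {a c γ : ℝ} (ha : 0 ≤ a) (hc : 0 ≤ c)
    (hγ0 : 0 ≤ γ) (hγ1 : γ ≤ 1) : |a ^ γ - c ^ γ| ≤ |a - c| ^ γ := by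
  rcases le_total a c with h | h
  · rw [abs_sub_comm, abs_of_nonneg (sub_nonneg.2 (Real.rpow_le_rpow ha h hγ0)),
      abs_sub_comm, abs_of_nonneg (sub_nonneg.2 h)]
    exact rpow_sub_le_sub_rpow ha h hγ0 hγ1
  · rw [abs_of_nonneg (sub_nonneg.2 (Real.rpow_le_rpow hc h hγ0)),
      abs_of_nonneg (sub_nonneg.2 h)]
    exact rpow_sub_le_sub_rpow hc h hγ0 hγ1

lemma vplus_abs_sub_le (V : Finset (Fin k)) (y z : Fin k → ℝ) (j : Fin k) :
    |(vplus V y - vplus V z) j| ≤ |(y - z) j| := by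
  simp only [Pi.sub_apply, vplus]
  by_cases hj : j ∈ V
  · simp only [hj, if_true]
    exact abs_max_sub_max_le_abs (y j) (z j) 0
  · simp [hj, le_refl]

lemma vplus_mono (V : Finset (Fin k)) (Nm : MonNorm k) {x z : Fin k → ℝ}
    (h1 : ∀ j ∈ V, z j ≤ x j) (h2 : ∀ j ∉ V, x j = z j) :
    Nm.N (vplus V z) ≤ Nm.N (vplus V x) := by
  apply Nm.mono
  intro j
  simp only [vplus]
  by_cases hj : j ∈ V
  · simp only [hj, if_true]
    rw [abs_of_nonneg (le_max_right _ _), abs_of_nonneg (le_max_right _ _)]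
    exact max_le_max (h1 j hj) le_rfl
  · simp [hj, h2 j hj]

end Aux

/-- when `V` is a proper subset of the coordinates and no design point
lies in `A_V`, the pair `(f₁*, f₂*)` is feasible for the inverse ordered modulus problem
`ω⁻¹(b, Λ₊,V(γ,C), Λ₊,V(0,∞))`, agrees at every design point, and hence the inverse
ordered modulus is `0`. -/
theorem stmt_18 {k : ℕ} (V : Finset (Fin k)) (hV : V ≠ Finset.univ)
    (Nm : MonNorm k) (γ C b : ℝ)
    (hγ0 : 0 < γ) (hγ1 : γ ≤ 1) (hC : 0 < C) (hb : 0 < b)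
    (n : ℕ) (x : Fin n → (Fin k → ℝ)) (hx : ∀ i, x i ∉ Aset V) :
    (fun y => min (C * Nm.N (vplus V y) ^ γ) b) ∈ Lam V Nm.N γ C ∧
    (fun y => if y ∈ Aset V then b else min (C * Nm.N (vplus V y) ^ γ) b) ∈
      MonoClass V ∧
    (if (0 : Fin k → ℝ) ∈ Aset V then b
      else min (C * Nm.N (vplus V (0 : Fin k → ℝ)) ^ γ) b) -
      min (C * Nm.N (vplus V (0 : Fin k → ℝ)) ^ γ) b = b ∧
    (∀ i, (if x i ∈ Aset V then b else min (C * Nm.N (vplus V (x i)) ^ γ) b)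
      = min (C * Nm.N (vplus V (x i)) ^ γ) b) ∧
    invMod n x b (Lam V Nm.N γ C) (MonoClass V) = 0 := by
  
  have hNz : vplus V (0 : Fin k → ℝ) = 0 := by
    funext j; simp [vplus]
  have hf1zero : min (C * Nm.N (vplus V (0 : Fin k → ℝ)) ^ γ) b = 0 := by
    rw [hNz, Nm.zero, Real.zero_rpow hγ0.ne', mul_zero, min_eq_left hb.le]
  have h0A : (0 : Fin k → ℝ) ∈ Aset V := ⟨fun j _ => rfl, fun j _ => le_rfl⟩
  have hmono : MonoV V (fun y => min (C * Nm.N (vplus V y) ^ γ) b) := by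
    intro x' z' h1 h2
    have := vplus_mono V Nm h1 h2
    exact min_le_min (mul_le_mul_of_nonneg_left
      (Real.rpow_le_rpow (Nm.nonneg _) this hγ0.le) hC.le) le_rfl
  have hf1 : (fun y => min (C * Nm.N (vplus V y) ^ γ) b) ∈ Lam V Nm.N γ C := by
    constructor
    · intro y z
      set a := Nm.N (vplus V y) with ha
      set c := Nm.N (vplus V z) with hc
      have h1 : |min (C * a ^ γ) b - min (C * c ^ γ) b| ≤ |C * a ^ γ - C * c ^ γ| := by
        have := abs_min_sub_min_le_max (C * a ^ γ) b (C * c ^ γ) b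
        simpa using this
      have h2 : |C * a ^ γ - C * c ^ γ| = C * |a ^ γ - c ^ γ| := by
        rw [← mul_sub, abs_mul, abs_of_nonneg hC.le]
      have h3 : |a ^ γ - c ^ γ| ≤ |a - c| ^ γ :=
        abs_rpow_sub_rpow (Nm.nonneg _) (Nm.nonneg _) hγ0.le hγ1
      have h4 : |a - c| ≤ Nm.N (y - z) := by
        refine le_trans (Nm.abs_sub _ _) ?_
        have : vplus V y - vplus V z = vplus V y - vplus V z := rfl
        exact Nm.mono _ _ (fun j => vplus_abs_sub_le V y z j)
      have h5 : |a - c| ^ γ ≤ Nm.N (y - z) ^ γ :=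
        Real.rpow_le_rpow (abs_nonneg _) h4 hγ0.le
      calc |min (C * a ^ γ) b - min (C * c ^ γ) b|
          ≤ C * |a ^ γ - c ^ γ| := h1.trans_eq h2
        _ ≤ C * |a - c| ^ γ := mul_le_mul_of_nonneg_left h3 hC.le
        _ ≤ C * Nm.N (y - z) ^ γ := mul_le_mul_of_nonneg_left h5 hC.le
    · exact hmono
  have hf2 : (fun y => if y ∈ Aset V then b else min (C * Nm.N (vplus V y) ^ γ) b) ∈
      MonoClass V := by
    intro x' z' h1 h2
    by_cases hz : z' ∈ Aset V
    · have hxA : x' ∈ Aset V :=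
        ⟨fun j hj => (h2 j hj).trans (hz.1 j hj), fun j hj => (hz.2 j hj).trans (h1 j hj)⟩
      simp [hz, hxA]
    · by_cases hxA : x' ∈ Aset V
      · simp only [if_neg hz, if_pos hxA]
        exact min_le_right _ _
      · simp only [if_neg hz, if_neg hxA]
        exact hmono x' z' h1 h2
  have hdesign : ∀ i, (if x i ∈ Aset V then b
      else min (C * Nm.N (vplus V (x i)) ^ γ) b) = min (C * Nm.N (vplus V (x i)) ^ γ) b :=
    fun i => if_neg (hx i)
  have hgap : (if (0 : Fin k → ℝ) ∈ Aset V then b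
      else min (C * Nm.N (vplus V (0 : Fin k → ℝ)) ^ γ) b) -
      min (C * Nm.N (vplus V (0 : Fin k → ℝ)) ^ γ) b = b := by
    rw [if_pos h0A, hf1zero, sub_zero]
  refine ⟨hf1, hf2, hgap, hdesign, ?_⟩
  have h0mem : (0 : ℝ) ∈ {r : ℝ | ∃ f ∈ Lam V Nm.N γ C, ∃ g ∈ MonoClass V,
      g 0 - f 0 = b ∧ r = Real.sqrt (∑ i, (g (x i) - f (x i)) ^ 2)} := by
    refine ⟨_, hf1, _, hf2, ?_, ?_⟩
    · simpa using hgap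
    · have : ∀ i : Fin n,
          ((if x i ∈ Aset V then b else min (C * Nm.N (vplus V (x i)) ^ γ) b) -
            min (C * Nm.N (vplus V (x i)) ^ γ) b) ^ 2 = 0 := by
        intro i; rw [hdesign i, sub_self]; ring
      simp only [this, Finset.sum_const_zero, Real.sqrt_zero]
  unfold invMod
  apply le_antisymm
  · exact csInf_le ⟨0, fun r hr => by
      obtain ⟨f, _, g, _, _, hr⟩ := hr
      rw [hr]; exact Real.sqrt_nonneg _⟩ h0mem
  · refine le_csInf ⟨0, h0mem⟩ ?_
    rintro r ⟨f, _, g, _, _, hr⟩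
    rw [hr]; exact Real.sqrt_nonneg _
end
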